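/- Let g(x) = (1/n)∑ᵢ vᵢ ∇fᵢ(x) with τ-nice sampling weights (E[vᵢ²] = n/τ, E[vᵢvⱼ] = n(τ−1)/(τ(n−1)) for i ≠ j). Then E‖g(x)‖² = (n(τ−1)/(τ(n−1)))‖∇f(x)‖² + ((n−τ)/(τ(n−1)))·(1/n)∑ᵢ ‖∇fᵢ(x)‖². -/

import Mathlib

open MeasureTheory ProbabilityTheory Finset

lemma mul_int {Ω : Type*} [MeasureSpace Ω] (u w : Ω → ℝ) (hu : MemLp u 2 ℙ)
    (hw : MemLp w 2 ℙ) : Integrable (fun ω => u ω * w ω) ℙ := by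
  have h := L2.integrable_inner (𝕜 := ℝ) (hu.toLp u) (hw.toLp w)
  refine h.congr ?_
  filter_upwards [hu.coeFn_toLp, hw.coeFn_toLp] with ω h1 h2
  simp [h1, h2, RCLike.inner_apply, mul_comm]

theorem second_moment_tau_nice {Ω : Type*} [MeasureSpace Ω]
    [IsProbabilityMeasure (ℙ : Measure Ω)] {d : ℕ}
    (n τ : ℕ) (hn : 2 ≤ n) (hτ1 : 1 ≤ τ) (hτn : τ ≤ n)
    (f : Fin n → EuclideanSpace ℝ (Fin d) → ℝ)
    (hdiff : ∀ i x, DifferentiableAt ℝ (f i) x)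
    (v : Fin n → Ω → ℝ)
    (hv2 : ∀ i, MemLp (v i) 2 ℙ)
    (hmean : ∀ i, ∫ ω, v i ω = 1)
    (hsq : ∀ i, ∫ ω, (v i ω) ^ 2 = n / τ)
    (hcross : ∀ i j, i ≠ j → ∫ ω, v i ω * v j ω = n * (τ - 1) / (τ * (n - 1)))
    (x : EuclideanSpace ℝ (Fin d)) :
    ∫ ω, ‖(n : ℝ)⁻¹ • ∑ i, v i ω • gradient (f i) x‖ ^ 2 =
      (n * (τ - 1) / (τ * (n - 1))) * ‖(n : ℝ)⁻¹ • ∑ i, gradient (f i) x‖ ^ 2 +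
        ((n - τ) / (τ * (n - 1))) * ((n : ℝ)⁻¹ * ∑ i, ‖gradient (f i) x‖ ^ 2) := by
  set g : Fin n → EuclideanSpace ℝ (Fin d) := fun i => gradient (f i) x with hg
  set a : ℝ := (n : ℝ) / τ with ha
  set c : ℝ := (n : ℝ) * (τ - 1) / (τ * (n - 1)) with hc
  set P : Fin n → Fin n → ℝ := fun i j => inner ℝ (g i) (g j) with hP
  -- pointwise expansion
  have exp1 : ∀ ω : Ω, ‖(n : ℝ)⁻¹ • ∑ i, v i ω • g i‖ ^ 2
      = ∑ i, ∑ j, ((n : ℝ)⁻¹ ^ 2 * (v i ω * v j ω)) * P i j := by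
    intro ω
    rw [norm_smul, mul_pow, Real.norm_eq_abs, sq_abs, ← real_inner_self_eq_norm_sq, sum_inner]
    simp only [inner_sum, real_inner_smul_left, real_inner_smul_right, Finset.mul_sum]
    refine Finset.sum_congr rfl fun i _ => Finset.sum_congr rfl fun j _ => ?_
    simp [hP]
    ring
  have hint : ∀ i j : Fin n, Integrable (fun ω => ((n : ℝ)⁻¹ ^ 2 * (v i ω * v j ω)) * P i j) ℙ :=
    fun i j => (((mul_int _ _ (hv2 i) (hv2 j)).const_mul _).mul_const _)
  have hvij : ∀ i j : Fin n, ∫ ω, v i ω * v j ω = if i = j then a else c := by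
    intro i j
    by_cases h : i = j
    · subst h
      rw [if_pos rfl, ← hsq i]
      exact integral_congr_ae (Filter.Eventually.of_forall fun ω => (pow_two (v i ω)).symm)
    · rw [if_neg h]; exact hcross i j h
  calc ∫ ω, ‖(n : ℝ)⁻¹ • ∑ i, v i ω • g i‖ ^ 2
      = ∫ ω, ∑ i, ∑ j, ((n : ℝ)⁻¹ ^ 2 * (v i ω * v j ω)) * P i j := by
        exact integral_congr_ae (Filter.Eventually.of_forall fun ω => exp1 ω)
    _ = ∑ i, ∑ j, ∫ ω, ((n : ℝ)⁻¹ ^ 2 * (v i ω * v j ω)) * P i j := by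
        rw [integral_finset_sum _ (fun i _ => integrable_finset_sum _ (fun j _ => hint i j))]
        exact Finset.sum_congr rfl fun i _ => integral_finset_sum _ (fun j _ => hint i j)
    _ = ∑ i, ∑ j, ((n : ℝ)⁻¹ ^ 2 * (if i = j then a else c)) * P i j := by
        refine Finset.sum_congr rfl fun i _ => Finset.sum_congr rfl fun j _ => ?_
        rw [show (fun ω => ((n : ℝ)⁻¹ ^ 2 * (v i ω * v j ω)) * P i j)
            = fun ω => ((n : ℝ)⁻¹ ^ 2 * P i j) * (v i ω * v j ω) by funext ω; ring]
        rw [integral_const_mul, hvij]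
        ring
    _ = (n : ℝ)⁻¹ ^ 2 * (c * (∑ i, ∑ j, P i j) + (a - c) * ∑ i, P i i) := by
        have : ∀ i j : Fin n, ((n : ℝ)⁻¹ ^ 2 * (if i = j then a else c)) * P i j
            = (n : ℝ)⁻¹ ^ 2 * (c * P i j) + (if j = i then (n : ℝ)⁻¹ ^ 2 * ((a - c) * P i i) else 0) := by
          intro i j
          by_cases h : i = j
          · subst h; simp; ring
          · rw [if_neg h, if_neg (Ne.symm h)]; ring
        simp only [this, Finset.sum_add_distrib, Finset.sum_ite_eq', Finset.mem_univ, if_true]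
        simp only [← Finset.mul_sum, mul_add]
    _ = c * ‖(n : ℝ)⁻¹ • ∑ i, g i‖ ^ 2 + ((n : ℝ) - τ) / (τ * (n - 1)) * ((n : ℝ)⁻¹ * ∑ i, ‖g i‖ ^ 2) := by
        have hS : (∑ i, ∑ j, P i j) = ‖∑ i, g i‖ ^ 2 := by
          rw [← real_inner_self_eq_norm_sq, sum_inner]
          exact Finset.sum_congr rfl fun i _ => (inner_sum _ _ _).symm
        have hT : (∑ i, P i i) = ∑ i, ‖g i‖ ^ 2 := by
          exact Finset.sum_congr rfl fun i _ => real_inner_self_eq_norm_sq _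
        rw [hS, hT, norm_smul, mul_pow, Real.norm_eq_abs, sq_abs]
        have hn0 : (n : ℝ) ≠ 0 := by positivity
        have hτ0 : (τ : ℝ) ≠ 0 := by positivity
        have hn1 : (n : ℝ) - 1 ≠ 0 := by
          have : (2 : ℝ) ≤ n := by exact_mod_cast hn
          linarith
        rw [hc, ha]
        field_simp
        ring
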